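/- Let α, σ : ℝ → ℝ be positive differentiable functions, let λ(t) = log(α(t)/σ(t)) be strictly decreasing with differentiable inverse t(λ), and define f(t) = d/dt log α(t) and g²(t) = d/dt σ²(t) − 2σ²(t) · d/dt log α(t). If x : ℝ → ℝ^D satisfies x(t) = (σ(t)/σ(s)) x(s) + σ(t) ∫_{λ(s)}^{λ(t)} e^λ X(λ) dλ for a continuous function X and all t, then x satisfies the ODE dx/dt = (f(t) + g²(t)/(2σ²(t))) x(t) − (α(t) g²(t)/(2σ²(t))) X(λ(t)). -/

import Mathlib

open Real intervalIntegral

/-- Exact-solution (variation of constants) formula for the data-prediction diffusion ODE: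
if `x t = (σ t / σ s) • x s + σ t • ∫_{Λ s}^{Λ t} e^λ • X λ dλ`, then `x` solves
`dx/dt = (f t + g² t / (2 σ t ^ 2)) x t − (α t g² t / (2 σ t ^ 2)) X (Λ t)`. -/
theorem stmt0 {D : ℕ} (α σ : ℝ → ℝ) (hα : ∀ t, 0 < α t) (hσ : ∀ t, 0 < σ t)
    (hαd : Differentiable ℝ α) (hσd : Differentiable ℝ σ)
    (Λ : ℝ → ℝ) (hΛ : ∀ t, Λ t = Real.log (α t / σ t))
    (hΛmono : StrictAnti Λ)
    (tinv : ℝ → ℝ) (htinv : Function.LeftInverse tinv Λ) (htinvd : Differentiable ℝ tinv)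
    (f g2 : ℝ → ℝ)
    (hf : ∀ t, f t = deriv (fun u => Real.log (α u)) t)
    (hg2 : ∀ t, g2 t = deriv (fun u => (σ u)^2) t
      - 2 * (σ t)^2 * deriv (fun u => Real.log (α u)) t)
    (X : ℝ → EuclideanSpace ℝ (Fin D)) (hX : Continuous X)
    (s : ℝ) (x : ℝ → EuclideanSpace ℝ (Fin D))
    (hx : ∀ t, x t = (σ t / σ s) • x s + σ t • ∫ l in (Λ s)..(Λ t), Real.exp l • X l) :
    ∀ t, HasDerivAt x ((f t + g2 t / (2 * (σ t)^2)) • x t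
      - ((α t * g2 t) / (2 * (σ t)^2)) • X (Λ t)) t := by
  intro t
  have hαt := (hαd t).hasDerivAt
  have hσt := (hσd t).hasDerivAt
  have hαne : α t ≠ 0 := (hα t).ne'
  have hσne : σ t ≠ 0 := (hσ t).ne'
  set F : ℝ → EuclideanSpace ℝ (Fin D) := fun μ => ∫ l in (Λ s)..μ, Real.exp l • X l with hF
  have hXc : Continuous (fun l => Real.exp l • X l) := Real.continuous_exp.smul hX
  have hFd : HasDerivAt F (Real.exp (Λ t) • X (Λ t)) (Λ t) :=
    (hXc.integral_hasStrictDerivAt (Λ s) (Λ t)).hasDerivAt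
  have hΛfun : Λ = fun u => Real.log (α u) - Real.log (σ u) := by
    funext u; rw [hΛ u, Real.log_div (hα u).ne' (hσ u).ne']
  have hΛd : HasDerivAt Λ (deriv α t / α t - deriv σ t / σ t) t := by
    rw [hΛfun]; exact (hαt.log hαne).sub (hσt.log hσne)
  have hcomp : HasDerivAt (fun u => F (Λ u))
      ((deriv α t / α t - deriv σ t / σ t) • (Real.exp (Λ t) • X (Λ t))) t :=
    hFd.scomp t hΛd
  have hxfun : x = fun u => (σ u / σ s) • x s + σ u • F (Λ u) := funext hx
  have hD : HasDerivAt (fun u => (σ u / σ s) • x s + σ u • F (Λ u)) _ t := ((hσt.div_const (σ s)).smul_const (x s)).add (hσt.smul hcomp)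
  rw [← hxfun] at hD
  have hlog : deriv (fun u => Real.log (α u)) t = deriv α t / α t := (hαt.log hαne).deriv
  have hsq : deriv (fun u => (σ u)^2) t = 2 * σ t * deriv σ t := by
    have : deriv (fun u => (σ u)^2) t = _ := (hσt.pow 2).deriv
    simpa using this.trans (by ring)
  have hE : Real.exp (Λ t) = α t / σ t := by
    rw [hΛ t]; exact Real.exp_log (div_pos (hα t) (hσ t))
  convert hD using 1
  rw [hx t, hE, hf, hg2, hlog, hsq]
  have hσsne : σ s ≠ 0 := (hσ s).ne'
  match_scalars
  · field_simp; ring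
  · field_simp; ring
  · field_simp; ring
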